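/- Let C₁, C₂ be positive real constants, let H ≥ 1 be an integer, and let p be a real number with p > 0 and p ≥ 2·√( 2·C₁·(log H)·( √(1 + 4·C₂²·(log H)²) + 2·C₂·log H ) ). Then there exist real numbers b'₁, …, b'_H such that: (i) b'₁ = 1/p²; (ii) for every integer h with 2 ≤ h ≤ H, (h−1)·(b'_h − b'_{h−1}) ≥ C₁·(b'_h)² + C₂/p²; and (iii) for every 1 ≤ h ≤ H, b'_h ≤ (1/p²)·( 1 + (4·C₂ + 8·C₁/p²)·log H ). -/

import Mathlib

theorem aux_P (t S : ℝ) (ht0 : 0 ≤ t) (hS0 : 0 ≤ S) (hS2 : S ^ 2 = 1 + t ^ 2) :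
    0 ≤ S * (t - 1) + t ^ 2 - t + 1 := by
  rcases le_total t 1 with h | h
  · have ha : 0 ≤ S * (1 - t) := mul_nonneg hS0 (by linarith)
    have hb : (0:ℝ) ≤ t ^ 2 - t + 1 := by nlinarith [sq_nonneg (t - 1/2)]
    have hid : (t ^ 2 - t + 1) ^ 2 - (S * (1 - t)) ^ 2 = t ^ 2 := by
      linear_combination (-(1 - t) ^ 2) * hS2
    nlinarith [sq_nonneg t]
  · have := mul_nonneg hS0 (by linarith : (0:ℝ) ≤ t - 1)
    nlinarith [sq_nonneg (t - 1/2)]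

set_option maxHeartbeats 1600000 in
theorem stmt_9 (C₁ C₂ : ℝ) (hC₁ : 0 < C₁) (hC₂ : 0 < C₂) (H : ℕ) (hH : 1 ≤ H)
    (p : ℝ) (hp : 0 < p)
    (hpge : p ≥ 2 * Real.sqrt (2 * C₁ * Real.log H *
      (Real.sqrt (1 + 4 * C₂ ^ 2 * (Real.log H) ^ 2) + 2 * C₂ * Real.log H))) :
    ∃ b' : ℕ → ℝ,
      b' 1 = 1 / p ^ 2 ∧
      (∀ h : ℕ, 2 ≤ h → h ≤ H →
        ((h : ℝ) - 1) * (b' h - b' (h - 1)) ≥ C₁ * (b' h) ^ 2 + C₂ / p ^ 2) ∧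
      (∀ h : ℕ, 1 ≤ h → h ≤ H →
        b' h ≤ (1 / p ^ 2) * (1 + (4 * C₂ + 8 * C₁ / p ^ 2) * Real.log H)) := by
  have hp2 : (0:ℝ) < p ^ 2 := by positivity
  set L : ℝ := Real.log H with hLdef
  have hL0 : 0 ≤ L := Real.log_nonneg (by exact_mod_cast hH)
  set S : ℝ := Real.sqrt (1 + 4 * C₂ ^ 2 * L ^ 2) with hSdef
  set t : ℝ := 2 * C₂ * L with htdef
  have ht0 : 0 ≤ t := by positivity
  have hS2 : S ^ 2 = 1 + t ^ 2 := by
    rw [hSdef, Real.sq_sqrt (by positivity)]; ring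
  have hS0 : 0 ≤ S := Real.sqrt_nonneg _
  have hS1 : 1 ≤ S := by nlinarith
  have hSt : t ≤ S := by nlinarith
  -- p^2 ≥ 8 C₁ L (S + t)
  have hA : (0:ℝ) ≤ 2 * C₁ * L * (S + t) := by positivity
  have hpp : 8 * C₁ * L * (S + t) ≤ p ^ 2 := by
    have h1 := Real.sq_sqrt hA
    have h2 : Real.sqrt (2 * C₁ * L * (S + t)) ≥ 0 := Real.sqrt_nonneg _
    have h3 : p ≥ 2 * Real.sqrt (2 * C₁ * L * (S + t)) := by
      convert hpge using 4 <;> ring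
    nlinarith
  set u : ℝ := 1 / p ^ 2 with hudef
  have hu0 : 0 < u := by positivity
  have hup : u * p ^ 2 = 1 := by rw [hudef]; field_simp
  set K : ℝ := 4 * C₂ + 8 * C₁ * u with hKdef
  have hK0 : 0 < K := by positivity
  have hKu2 : K * u = 4 * C₂ * u + 8 * C₁ * u ^ 2 := by rw [hKdef]; ring
  clear_value L S t u K
  -- step 1 : K * L ≤ S + t
  have step1 : K * L ≤ S + t := by
    have hd : 0 ≤ S - t := by linarith
    have h8 : 8 * C₁ * L ≤ p ^ 2 * (S - t) := by nlinarith
    have h9 : 8 * C₁ * u * L ≤ S - t := by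
      have := mul_le_mul_of_nonneg_left h8 hu0.le
      calc 8 * C₁ * u * L = u * (8 * C₁ * L) := by ring
        _ ≤ u * (p ^ 2 * (S - t)) := this
        _ = (u * p ^ 2) * (S - t) := by ring
        _ = S - t := by rw [hup]; ring
    rw [hKdef]; nlinarith
  -- P ≥ 0 : S*(t-1) + t^2 - t + 1 ≥ 0
  have hP : 0 ≤ S * (t - 1) + t ^ 2 - t + 1 := aux_P t S ht0 hS0 hS2
  -- key : C₂ p² + 4 C₁ ≥ C₁ (1 + K L)²
  have key : C₁ * (1 + K * L) ^ 2 ≤ C₂ * p ^ 2 + 4 * C₁ := by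
    have hKL0 : 0 ≤ K * L := mul_nonneg hK0.le hL0
    have hmono : (1 + K * L) ^ 2 ≤ (1 + S + t) ^ 2 := by nlinarith
    have hm2 : C₁ * (1 + K * L) ^ 2 ≤ C₁ * (1 + S + t) ^ 2 :=
      mul_le_mul_of_nonneg_left hmono hC₁.le
    have hpc : C₂ * (8 * C₁ * L * (S + t)) ≤ C₂ * p ^ 2 :=
      mul_le_mul_of_nonneg_left hpp hC₂.le
    have hC2L : C₂ * (8 * C₁ * L * (S + t)) = 4 * C₁ * t * (S + t) := by
      rw [htdef]; ring
    have hP' : 0 ≤ C₁ * (S * (t - 1) + t ^ 2 - t + 1) := mul_nonneg hC₁.le hP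
    have hid : C₁ * (1 + S + t) ^ 2
        = 4 * C₁ * t * (S + t) + 4 * C₁ - 2 * C₁ * (S * (t - 1) + t ^ 2 - t + 1) := by
      linear_combination C₁ * hS2
    linarith [hm2, hpc, hP', hid, hC2L.symm.le.trans hpc]
  refine ⟨fun n => (1 + K * Real.log n) / p ^ 2, by simp [hudef], ?_, ?_⟩
  · intro h hh2 hhH
    have hcast : ((h - 1 : ℕ) : ℝ) = (h : ℝ) - 1 := by
      have : 1 ≤ h := by omega
      push_cast [this]; ring
    have hh2' : (2:ℝ) ≤ (h:ℝ) := by exact_mod_cast hh2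
    have hhpos : (0:ℝ) < (h:ℝ) := by linarith
    have hlogh0 : 0 ≤ Real.log h := Real.log_nonneg (by linarith)
    have hloghL : Real.log h ≤ L := by
      rw [hLdef]; exact Real.log_le_log (by linarith) (by exact_mod_cast hhH)
    -- log difference bound
    have hlog : 1 / (h:ℝ) ≤ Real.log h - Real.log ((h:ℝ) - 1) := by
      have hpos : (0:ℝ) < ((h:ℝ) - 1) / (h:ℝ) := by apply div_pos <;> linarith
      have h1 := Real.log_le_sub_one_of_pos hpos
      rw [Real.log_div (by linarith) (by linarith)] at h1
      have : ((h:ℝ) - 1) / (h:ℝ) - 1 = -(1 / h) := by field_simp; ring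
      rw [this] at h1; linarith
    have hD : 1/2 ≤ ((h:ℝ) - 1) * (Real.log h - Real.log ((h:ℝ) - 1)) := by
      have h1 : ((h:ℝ) - 1) * (1 / h) ≤ ((h:ℝ) - 1) * (Real.log h - Real.log ((h:ℝ) - 1)) :=
        mul_le_mul_of_nonneg_left hlog (by linarith)
      have h2 : (1:ℝ)/2 ≤ ((h:ℝ) - 1) * (1 / h) := by
        rw [mul_one_div, le_div_iff₀ hhpos]; linarith
      linarith
    show ((h:ℝ) - 1) * ((1 + K * Real.log h) / p ^ 2 - (1 + K * Real.log ((h-1:ℕ))) / p ^ 2)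
        ≥ C₁ * ((1 + K * Real.log h) / p ^ 2) ^ 2 + C₂ / p ^ 2
    rw [hcast]
    have hb : 1 + K * Real.log h ≤ 1 + K * L := by
      have := mul_le_mul_of_nonneg_left hloghL hK0.le; linarith
    have hb0 : 0 ≤ 1 + K * Real.log h := by nlinarith [mul_nonneg hK0.le hlogh0]
    have hbL : 0 ≤ 1 + K * L := by nlinarith [mul_nonneg hK0.le hL0]
    have hsq : (1 + K * Real.log h) ^ 2 ≤ (1 + K * L) ^ 2 := by nlinarith [hb, hb0, hbL]
    have t1 : C₁ * (1 + K * L) ^ 2 * u ^ 2 ≤ (C₂ * p ^ 2 + 4 * C₁) * u ^ 2 :=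
      mul_le_mul_of_nonneg_right key (sq_nonneg u)
    have t2 : C₂ * p ^ 2 * u ^ 2 = C₂ * u := by
      have : C₂ * p ^ 2 * u ^ 2 = C₂ * u * (u * p ^ 2) := by ring
      rw [this, hup, mul_one]
    have t3 : C₁ * ((1 + K * Real.log h) * u) ^ 2 ≤ C₁ * (1 + K * L) ^ 2 * u ^ 2 := by
      nlinarith [mul_nonneg hC₁.le (sq_nonneg u)]
    have hKu : 0 ≤ K * u := mul_nonneg hK0.le hu0.le
    have t4 : (1/2) * (K * u) ≤
        (((h:ℝ) - 1) * (Real.log h - Real.log ((h:ℝ) - 1))) * (K * u) :=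
      mul_le_mul_of_nonneg_right hD hKu
    have lhs_eq : ((h:ℝ) - 1) * ((1 + K * Real.log h) / p ^ 2 - (1 + K * Real.log ((h:ℝ)-1)) / p ^ 2)
        = (((h:ℝ) - 1) * (Real.log h - Real.log ((h:ℝ) - 1))) * (K * u) := by
      rw [hudef]; field_simp; ring
    have rhs_eq : C₁ * ((1 + K * Real.log h) / p ^ 2) ^ 2 + C₂ / p ^ 2
        = C₁ * ((1 + K * Real.log h) * u) ^ 2 + C₂ * u := by
      rw [hudef]; field_simp
    rw [ge_iff_le, lhs_eq, rhs_eq]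
    linarith [t1, t2, t3, t4, hKu2]
  · intro h hh1 hhH
    have hh1' : (1:ℝ) ≤ (h:ℝ) := by exact_mod_cast hh1
    have hloghL : Real.log h ≤ L := by
      rw [hLdef]; exact Real.log_le_log (by linarith) (by exact_mod_cast hhH)
    rw [hudef]
    show (1 + K * Real.log h) / p ^ 2 ≤ (1 / p ^ 2) * (1 + (4 * C₂ + 8 * C₁ / p ^ 2) * L)
    have hre : (1 / p ^ 2) * (1 + (4 * C₂ + 8 * C₁ / p ^ 2) * L) = (1 + K * L) / p ^ 2 := by
      rw [hKdef, hudef]; field_simp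
    rw [hre, div_le_div_iff₀ hp2 hp2]
    have h1 := mul_le_mul_of_nonneg_left hloghL hK0.le
    have h2 : 1 + K * Real.log h ≤ 1 + K * L := by linarith
    exact mul_le_mul_of_nonneg_right h2 hp2.le
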